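/- Let V be a countable type with a metric d, and let μ, ν be finitely supported probability mass functions on V. Set Ω := supp(μ) ∪ supp(ν) (a finite set). Then W(μ,ν) = sup { ∑_{z ∈ Ω} g(z)·(μ(z) − ν(z)) : g : Ω → ℝ with |g(a) − g(b)| ≤ d(a,b) for all a, b ∈ Ω }; that is, in the Kantorovich dual problem it suffices to optimize over 1-Lipschitz functions defined only on the union of the supports. -/

import Mathlib

open scoped ENNReal

variable {V : Type*}

/-- `d` is a metric on `V`. -/
def IsMetric (d : V → V → ℝ) : Prop :=
  (∀ a b, d a b = d b a) ∧ (∀ a b, d a b = 0 ↔ a = b) ∧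
  (∀ a b c, d a c ≤ d a b + d b c)

/-- `q` is a coupling of the probability mass functions `μ` and `ν`. -/
def IsCoupling (μ ν : V → ℝ≥0∞) (q : V × V → ℝ≥0∞) : Prop :=
  (∀ a, ∑' b, q (a, b) = μ a) ∧ (∀ b, ∑' a, q (a, b) = ν b)

/-- The L¹-Wasserstein distance, computed in `[0,∞]`. -/
noncomputable def Wass (d : V → V → ℝ) (μ ν : V → ℝ≥0∞) : ℝ≥0∞ :=
  ⨅ q : {q : V × V → ℝ≥0∞ // IsCoupling μ ν q},
    ∑' p : V × V, ENNReal.ofReal (d p.1 p.2) * q.1 p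

/-- `μ` is a probability mass function on `V`. -/
def IsPMF (μ : V → ℝ≥0∞) : Prop := ∑' z, μ z = 1

lemma IsMetric.nonneg {d : V → V → ℝ} (hd : IsMetric d) (a b : V) : 0 ≤ d a b := by
  have h1 := hd.2.2 a b a
  have h2 : d a a = 0 := (hd.2.1 a a).mpr rfl
  have h3 := hd.1 b a
  linarith

lemma IsCoupling.le_left {μ ν : V → ℝ≥0∞} {q : V × V → ℝ≥0∞} (h : IsCoupling μ ν q)
    (a b : V) : q (a, b) ≤ μ a := (h.1 a) ▸ ENNReal.le_tsum b

lemma IsCoupling.le_right {μ ν : V → ℝ≥0∞} {q : V × V → ℝ≥0∞} (h : IsCoupling μ ν q)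
    (a b : V) : q (a, b) ≤ ν b := (h.2 b) ▸ ENNReal.le_tsum a

lemma IsPMF.le_one {μ : V → ℝ≥0∞} (h : IsPMF μ) (a : V) : μ a ≤ 1 :=
  h ▸ ENNReal.le_tsum a

lemma prod_coupling {μ ν : V → ℝ≥0∞} (hμ : IsPMF μ) (hν : IsPMF ν) :
    IsCoupling μ ν (fun p => μ p.1 * ν p.2) := by
  constructor
  · intro a; simp only []; rw [ENNReal.tsum_mul_left, hν, mul_one]
  · intro b; simp only []; rw [ENNReal.tsum_mul_right, hμ, one_mul]

lemma IsPMF.ne_top {μ : V → ℝ≥0∞} (h : IsPMF μ) (a : V) : μ a ≠ ⊤ :=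
  ne_top_of_le_ne_top ENNReal.one_ne_top (h.le_one a)

section main
variable {d : V → V → ℝ} {μ ν : V → ℝ≥0∞} {Ω : Set V}

lemma mem_toFinset_iff (hΩ : Ω = {z | μ z ≠ 0} ∪ {z | ν z ≠ 0}) (hfin : Ω.Finite) (z : V) :
    z ∈ hfin.toFinset ↔ (μ z ≠ 0 ∨ ν z ≠ 0) := by
  rw [Set.Finite.mem_toFinset, hΩ]; rfl

lemma coupling_zero_off (hΩ : Ω = {z | μ z ≠ 0} ∪ {z | ν z ≠ 0}) (hfin : Ω.Finite)
    {q : V × V → ℝ≥0∞} (hq : IsCoupling μ ν q) {p : V × V}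
    (hp : p ∉ hfin.toFinset ×ˢ hfin.toFinset) : q p = 0 := by
  rw [Finset.mem_product, not_and_or] at hp
  rcases hp with hp | hp
  · have h1 : μ p.1 = 0 := by
      by_contra h; exact hp ((mem_toFinset_iff hΩ hfin p.1).mpr (Or.inl h))
    have := hq.le_left p.1 p.2
    simpa [h1] using this
  · have h1 : ν p.2 = 0 := by
      by_contra h; exact hp ((mem_toFinset_iff hΩ hfin p.2).mpr (Or.inr h))
    have := hq.le_right p.1 p.2
    simpa [h1] using this

lemma cost_eq (hd : IsMetric d) (hμ : IsPMF μ)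
    (hΩ : Ω = {z | μ z ≠ 0} ∪ {z | ν z ≠ 0}) (hfin : Ω.Finite)
    {q : V × V → ℝ≥0∞} (hq : IsCoupling μ ν q) :
    ∑' p : V × V, ENNReal.ofReal (d p.1 p.2) * q p =
      ENNReal.ofReal (∑ p ∈ hfin.toFinset ×ˢ hfin.toFinset, d p.1 p.2 * (q p).toReal) := by
  have hne : ∀ p : V × V, q p ≠ ⊤ := fun p =>
    ne_top_of_le_ne_top (hμ.ne_top p.1) (hq.le_left p.1 p.2)
  rw [tsum_eq_sum (s := hfin.toFinset ×ˢ hfin.toFinset)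
    (fun p hp => by rw [coupling_zero_off hΩ hfin hq hp, mul_zero])]
  rw [ENNReal.ofReal_sum_of_nonneg
    (fun p _ => mul_nonneg (hd.nonneg p.1 p.2) ENNReal.toReal_nonneg)]
  refine Finset.sum_congr rfl fun p _ => ?_
  rw [ENNReal.ofReal_mul (hd.nonneg p.1 p.2), ENNReal.ofReal_toReal (hne p)]

lemma sum_pmf_eq_one (hμ : IsPMF μ)
    (hΩ : Ω = {z | μ z ≠ 0} ∪ {z | ν z ≠ 0}) (hfin : Ω.Finite) :
    ∑ z ∈ hfin.toFinset, (μ z).toReal = 1 := by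
  have h : ∑ z ∈ hfin.toFinset, μ z = 1 := by
    rw [← tsum_eq_sum (L := SummationFilter.unconditional _) (s := hfin.toFinset) (fun z hz => by
      by_contra h
      exact hz ((mem_toFinset_iff hΩ hfin z).mpr (Or.inl h)))]
    exact hμ
  rw [← ENNReal.toReal_sum (fun z _ => hμ.ne_top z), h, ENNReal.toReal_one]

lemma sum_pmf_eq_one' (hν : IsPMF ν)
    (hΩ : Ω = {z | μ z ≠ 0} ∪ {z | ν z ≠ 0}) (hfin : Ω.Finite) :
    ∑ z ∈ hfin.toFinset, (ν z).toReal = 1 := by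
  have h : ∑ z ∈ hfin.toFinset, ν z = 1 := by
    rw [← tsum_eq_sum (L := SummationFilter.unconditional _) (s := hfin.toFinset) (fun z hz => by
      by_contra h
      exact hz ((mem_toFinset_iff hΩ hfin z).mpr (Or.inr h)))]
    exact hν
  rw [← ENNReal.toReal_sum (fun z _ => hν.ne_top z), h, ENNReal.toReal_one]

end main

section main2
variable {d : V → V → ℝ} {μ ν : V → ℝ≥0∞} {Ω : Set V}

lemma row_sum (hμ : IsPMF μ)
    (hΩ : Ω = {z | μ z ≠ 0} ∪ {z | ν z ≠ 0}) (hfin : Ω.Finite)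
    {q : V × V → ℝ≥0∞} (hq : IsCoupling μ ν q) (a : V) :
    ∑ b ∈ hfin.toFinset, (q (a, b)).toReal = (μ a).toReal := by
  have h : ∑ b ∈ hfin.toFinset, q (a, b) = μ a := by
    rw [← tsum_eq_sum (L := SummationFilter.unconditional _) (s := hfin.toFinset) (fun b hb =>
      coupling_zero_off hΩ hfin hq (p := (a, b)) (by
        rw [Finset.mem_product]; exact fun h => hb h.2))]
    exact hq.1 a
  rw [← ENNReal.toReal_sum (fun b _ =>
    ne_top_of_le_ne_top (hμ.ne_top a) (hq.le_left a b)), h]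

lemma col_sum (hμ : IsPMF μ)
    (hΩ : Ω = {z | μ z ≠ 0} ∪ {z | ν z ≠ 0}) (hfin : Ω.Finite)
    {q : V × V → ℝ≥0∞} (hq : IsCoupling μ ν q) (b : V) :
    ∑ a ∈ hfin.toFinset, (q (a, b)).toReal = (ν b).toReal := by
  have h : ∑ a ∈ hfin.toFinset, q (a, b) = ν b := by
    rw [← tsum_eq_sum (L := SummationFilter.unconditional _) (s := hfin.toFinset) (fun a ha =>
      coupling_zero_off hΩ hfin hq (p := (a, b)) (by
        rw [Finset.mem_product]; exact fun h => ha h.1))]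
    exact hq.2 b
  rw [← ENNReal.toReal_sum (fun a _ =>
    ne_top_of_le_ne_top (hμ.ne_top a) (hq.le_left a b)), h]

lemma weak_duality (hd : IsMetric d) (hμ : IsPMF μ)
    (hΩ : Ω = {z | μ z ≠ 0} ∪ {z | ν z ≠ 0}) (hfin : Ω.Finite)
    {q : V × V → ℝ≥0∞} (hq : IsCoupling μ ν q) {g : V → ℝ}
    (hg : ∀ a ∈ Ω, ∀ b ∈ Ω, |g a - g b| ≤ d a b) :
    ∑ z ∈ hfin.toFinset, g z * ((μ z).toReal - (ν z).toReal) ≤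
      ∑ p ∈ hfin.toFinset ×ˢ hfin.toFinset, d p.1 p.2 * (q p).toReal := by
  set F := hfin.toFinset with hF
  have key : ∑ z ∈ F, g z * ((μ z).toReal - (ν z).toReal) =
      ∑ p ∈ F ×ˢ F, (g p.1 - g p.2) * (q p).toReal := by
    have h1 : ∑ z ∈ F, g z * (μ z).toReal = ∑ p ∈ F ×ˢ F, g p.1 * (q p).toReal := by
      rw [Finset.sum_product]
      refine Finset.sum_congr rfl fun a _ => ?_
      simp only []
      rw [← Finset.mul_sum, row_sum hμ hΩ hfin hq a]
    have h2 : ∑ z ∈ F, g z * (ν z).toReal = ∑ p ∈ F ×ˢ F, g p.2 * (q p).toReal := by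
      rw [Finset.sum_product_right]
      refine Finset.sum_congr rfl fun b _ => ?_
      simp only []
      rw [← Finset.mul_sum, col_sum hμ hΩ hfin hq b]
    simp only [mul_sub, sub_mul, Finset.sum_sub_distrib, h1, h2]
  rw [key]
  refine Finset.sum_le_sum fun p hp => ?_
  rw [Finset.mem_product] at hp
  have hp1 : p.1 ∈ Ω := hfin.mem_toFinset.mp hp.1
  have hp2 : p.2 ∈ Ω := hfin.mem_toFinset.mp hp.2
  exact mul_le_mul_of_nonneg_right
    ((le_abs_self _).trans (hg p.1 hp1 p.2 hp2)) ENNReal.toReal_nonneg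

end main2

section strong
variable {d : V → V → ℝ} {μ ν : V → ℝ≥0∞} {Ω : Set V}

lemma sum_attach_univ (F : Finset V) (g : V → ℝ) :
    ∑ z : {x // x ∈ F}, g ↑z = ∑ z ∈ F, g z := by
  rw [Finset.univ_eq_attach, Finset.sum_attach]

lemma sum_attach_prod (F : Finset V) (f : V → V → ℝ) :
    ∑ p : {x // x ∈ F} × {x // x ∈ F}, f ↑p.1 ↑p.2 = ∑ p ∈ F ×ˢ F, f p.1 p.2 := by
  rw [Fintype.sum_prod_type, Finset.sum_product]
  calc ∑ a : {x // x ∈ F}, ∑ b : {x // x ∈ F}, f ↑a ↑b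
      = ∑ a : {x // x ∈ F}, ∑ b ∈ F, f ↑a b := by
        refine Finset.sum_congr rfl fun a _ => ?_
        rw [Finset.univ_eq_attach, Finset.sum_attach]
    _ = ∑ a ∈ F, ∑ b ∈ F, f a b := by
        rw [Finset.univ_eq_attach, Finset.sum_attach F (fun a => ∑ b ∈ F, f a b)]

lemma strong_duality (hd : IsMetric d) (hμ : IsPMF μ) (hν : IsPMF ν)
    (hΩ : Ω = {z | μ z ≠ 0} ∪ {z | ν z ≠ 0}) (hfin : Ω.Finite)
    (t : ℝ) (ht : t < (Wass d μ ν).toReal) :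
    ∃ g : V → ℝ, (∀ a ∈ Ω, ∀ b ∈ Ω, |g a - g b| ≤ d a b) ∧
      t < ∑ z ∈ hfin.toFinset, g z * ((μ z).toReal - (ν z).toReal) := by
  classical
  set F := hfin.toFinset with hFdef
  -- F is nonempty
  have hFne : F.Nonempty := by
    obtain ⟨z, hz⟩ : ∃ z, μ z ≠ 0 := by
      by_contra h
      push_neg at h
      have : (∑' z, μ z) = 0 := by simp [h]
      rw [hμ] at this; exact one_ne_zero this
    exact ⟨z, (mem_toFinset_iff hΩ hfin z).mpr (Or.inl hz)⟩
  have hι : Nonempty {x // x ∈ F} := ⟨⟨hFne.choose, hFne.choose_spec⟩⟩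
  set ι := {x // x ∈ F}
  -- real versions of μ, ν
  set μr : V → ℝ := fun z => (μ z).toReal with hμr
  set νr : V → ℝ := fun z => (ν z).toReal with hνr
  have hμr0 : ∀ z, 0 ≤ μr z := fun z => ENNReal.toReal_nonneg
  have hνr0 : ∀ z, 0 ≤ νr z := fun z => ENNReal.toReal_nonneg
  have hμrsum : ∑ a : ι, μr ↑a = 1 := by
    rw [sum_attach_univ]; exact sum_pmf_eq_one hμ hΩ hfin
  have hνrsum : ∑ a : ι, νr ↑a = 1 := by
    rw [sum_attach_univ]; exact sum_pmf_eq_one' hν hΩ hfin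
  -- the linear map
  set L : ((ι × ι) → ℝ) →ₗ[ℝ] ((ι → ℝ) × (ι → ℝ) × ℝ) :=
    { toFun := fun q => (fun a => ∑ b, q (a, b), fun b => ∑ a, q (a, b),
        ∑ p : ι × ι, d ↑p.1 ↑p.2 * q p)
      map_add' := by
        intro q r
        refine Prod.ext (funext fun a => ?_) (Prod.ext (funext fun b => ?_) ?_) <;>
          simp [Finset.sum_add_distrib, mul_add]
      map_smul' := by
        intro c q
        refine Prod.ext (funext fun a => ?_) (Prod.ext (funext fun b => ?_) ?_) <;>
          simp [Finset.mul_sum, mul_left_comm] } with hLdef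
  set Lc := LinearMap.toContinuousLinearMap L with hLc
  set D := Lc '' stdSimplex ℝ (ι × ι) with hD
  have hDconv : Convex ℝ D := (convex_stdSimplex ℝ _).linear_image L
  have hDcl : IsClosed D := ((isCompact_stdSimplex ℝ _).image Lc.continuous).isClosed
  -- the target point
  set pt : (ι → ℝ) × (ι → ℝ) × ℝ := (fun a => μr ↑a, fun b => νr ↑b, t) with hpt
  -- pt is not in D
  have hpt_not : pt ∉ D := by
    rintro ⟨q, hqΔ, hLq⟩
    have hq0 : ∀ p, 0 ≤ q p := hqΔ.1
    have hm1 : ∀ a : ι, ∑ b, q (a, b) = μr ↑a := fun a =>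
      congrFun (congrArg Prod.fst hLq) a
    have hm2 : ∀ b : ι, ∑ a, q (a, b) = νr ↑b := fun b =>
      congrFun (congrArg Prod.fst (congrArg Prod.snd hLq)) b
    have hcost : ∑ p : ι × ι, d ↑p.1 ↑p.2 * q p = t :=
      congrArg Prod.snd (congrArg Prod.snd hLq)
    -- build an ℝ≥0∞ coupling
    set Q : V × V → ℝ≥0∞ := fun p =>
      if h : p.1 ∈ F ∧ p.2 ∈ F then ENNReal.ofReal (q (⟨p.1, h.1⟩, ⟨p.2, h.2⟩)) else 0
      with hQdef
    have hQ : IsCoupling μ ν Q := by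
      constructor
      · intro a
        by_cases ha : a ∈ F
        · have : ∀ b, b ∉ F → Q (a, b) = 0 := by
            intro b hb; exact dif_neg (fun h => hb h.2)
          rw [tsum_eq_sum (s := F) (fun b hb => this b hb)]
          have : ∑ b ∈ F, Q (a, b) = ∑ b : ι, ENNReal.ofReal (q (⟨a, ha⟩, b)) := by
            rw [Finset.univ_eq_attach, ← Finset.sum_attach F (fun b => Q (a, b))]
            refine Finset.sum_congr rfl fun b _ => ?_
            exact dif_pos ⟨ha, b.2⟩
          rw [this, ← ENNReal.ofReal_sum_of_nonneg (fun b _ => hq0 _), hm1 ⟨a, ha⟩]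
          exact ENNReal.ofReal_toReal (hμ.ne_top a)
        · have haμ : μ a = 0 := by
            by_contra h
            exact ha ((mem_toFinset_iff hΩ hfin a).mpr (Or.inl h))
          have : ∀ b, Q (a, b) = 0 := by
            intro b; exact dif_neg (fun h => ha h.1)
          simp [this, haμ]
      · intro b
        by_cases hb : b ∈ F
        · have : ∀ a, a ∉ F → Q (a, b) = 0 := by
            intro a ha; exact dif_neg (fun h => ha h.1)
          rw [tsum_eq_sum (s := F) (fun a ha => this a ha)]
          have : ∑ a ∈ F, Q (a, b) = ∑ a : ι, ENNReal.ofReal (q (a, ⟨b, hb⟩)) := by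
            rw [Finset.univ_eq_attach, ← Finset.sum_attach F (fun a => Q (a, b))]
            refine Finset.sum_congr rfl fun a _ => ?_
            exact dif_pos ⟨a.2, hb⟩
          rw [this, ← ENNReal.ofReal_sum_of_nonneg (fun a _ => hq0 _), hm2 ⟨b, hb⟩]
          exact ENNReal.ofReal_toReal (hν.ne_top b)
        · have hbν : ν b = 0 := by
            by_contra h
            exact hb ((mem_toFinset_iff hΩ hfin b).mpr (Or.inr h))
          have : ∀ a, Q (a, b) = 0 := by
            intro a; exact dif_neg (fun h => hb h.2)
          simp [this, hbν]
    -- its cost is t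
    have hcostQ : ∑ p ∈ F ×ˢ F, d p.1 p.2 * (Q p).toReal = t := by
      rw [← hcost, ← sum_attach_prod F (fun a b => d a b * (Q (a, b)).toReal)]
      refine Finset.sum_congr rfl fun p _ => ?_
      have : Q (↑p.1, ↑p.2) = ENNReal.ofReal (q (p.1, p.2)) := by
        exact dif_pos ⟨p.1.2, p.2.2⟩
      rw [this, ENNReal.toReal_ofReal (hq0 _)]
    have ht0 : 0 ≤ t := by
      rw [← hcost]
      exact Finset.sum_nonneg fun p _ => mul_nonneg (hd.nonneg _ _) (hq0 p)
    have hWle : Wass d μ ν ≤ ENNReal.ofReal t := by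
      rw [← hcostQ]
      rw [Wass]
      refine iInf_le_of_le ⟨Q, hQ⟩ ?_
      rw [cost_eq hd hμ hΩ hfin hQ]
    have := ENNReal.toReal_mono ENNReal.ofReal_ne_top hWle
    rw [ENNReal.toReal_ofReal ht0] at this
    linarith
  -- separate
  obtain ⟨φ, u, hu1, hu2⟩ := geometric_hahn_banach_point_closed hDconv hDcl hpt_not
  -- potentials
  set e : ι → ι → ℝ := fun a j => if a = j then 1 else 0 with he
  set f : ι → ℝ := fun a => φ (e a, 0, 0) with hf
  set gg : ι → ℝ := fun b => φ (0, e b, 0) with hgg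
  set s : ℝ := φ (0, 0, 1) with hs
  have hLcoe : ∀ w, Lc w = L w := fun w =>
    congrFun (LinearMap.coe_toContinuousLinearMap' L) w
  -- splitting lemma for φ
  have hsplit : ∀ (x y : ι → ℝ) (c : ℝ),
      φ (x, y, c) = φ (x, 0, 0) + φ (0, y, 0) + c * s := by
    intro x y c
    have h1 : (x, y, c) = (x, (0 : ι → ℝ), (0 : ℝ)) + ((0 : ι → ℝ), y, (0 : ℝ))
        + c • ((0 : ι → ℝ), (0 : ι → ℝ), (1 : ℝ)) := by
      refine Prod.ext ?_ (Prod.ext ?_ ?_) <;> simp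
    rw [h1, map_add, map_add, map_smul, smul_eq_mul, hs]
  -- linear inclusions
  set j1 : (ι → ℝ) →ₗ[ℝ] ((ι → ℝ) × (ι → ℝ) × ℝ) :=
    { toFun := fun x => (x, 0, 0)
      map_add' := by intro x y; refine Prod.ext ?_ (Prod.ext ?_ ?_) <;> simp
      map_smul' := by intro c x; refine Prod.ext ?_ (Prod.ext ?_ ?_) <;> simp } with hj1
  set j2 : (ι → ℝ) →ₗ[ℝ] ((ι → ℝ) × (ι → ℝ) × ℝ) :=
    { toFun := fun x => (0, x, 0)
      map_add' := by intro x y; refine Prod.ext ?_ (Prod.ext ?_ ?_) <;> simp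
      map_smul' := by intro c x; refine Prod.ext ?_ (Prod.ext ?_ ?_) <;> simp } with hj2
  have hbasis : ∀ x : ι → ℝ, x = ∑ a : ι, x a • e a := by
    intro x
    funext j
    rw [Finset.sum_apply]
    simp [he, mul_ite]
    rw [Finset.sum_ite_eq']; simp
  have hlin1 : ∀ x : ι → ℝ, φ (x, 0, 0) = ∑ a : ι, x a * f a := by
    intro x
    calc φ (x, 0, 0) = (φ.toLinearMap.comp j1) (∑ a : ι, x a • e a) := by
          rw [← hbasis x]; rfl
      _ = ∑ a : ι, (φ.toLinearMap.comp j1) (x a • e a) := map_sum _ _ _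
      _ = ∑ a : ι, x a * f a := by
          refine Finset.sum_congr rfl fun a _ => ?_
          rw [map_smul, smul_eq_mul]
          rfl
  have hlin2 : ∀ x : ι → ℝ, φ (0, x, 0) = ∑ a : ι, x a * gg a := by
    intro x
    calc φ (0, x, 0) = (φ.toLinearMap.comp j2) (∑ a : ι, x a • e a) := by
          rw [← hbasis x]; rfl
      _ = ∑ a : ι, (φ.toLinearMap.comp j2) (x a • e a) := map_sum _ _ _
      _ = ∑ a : ι, x a * gg a := by
          refine Finset.sum_congr rfl fun a _ => ?_
          rw [map_smul, smul_eq_mul]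
          rfl
  -- the vertex inequalities
  have hvertex : ∀ a b : ι, u < f a + gg b + d ↑a ↑b * s := by
    intro a b
    set w : (ι × ι) → ℝ := fun r => if (a, b) = r then 1 else 0 with hw
    have hwΔ : w ∈ stdSimplex ℝ (ι × ι) := by
      constructor
      · intro r; rw [hw]; dsimp only; split <;> norm_num
      · rw [hw]; simp
        convert Finset.sum_ite_eq Finset.univ (a, b) (fun _ => (1:ℝ)) using 1; simp
    have hLw : Lc w = (e a, e b, d ↑a ↑b) := by
      rw [hLcoe]
      refine Prod.ext (funext fun a' => ?_) (Prod.ext (funext fun b' => ?_) ?_)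
      · show ∑ b' : ι, w (a', b') = e a a'
        by_cases h : a = a' <;> simp [hw, he, Prod.ext_iff, h]
        rw [Finset.sum_ite_eq]; simp
      · show ∑ a' : ι, w (a', b') = e b b'
        by_cases h : b = b' <;> simp [hw, he, Prod.ext_iff, h]
        rw [Finset.sum_ite_eq]; simp
      · show ∑ p : ι × ι, d ↑p.1 ↑p.2 * w p = d ↑a ↑b
        simp [hw, mul_ite]
        convert Finset.sum_ite_eq Finset.univ (a, b) (fun x => d ↑x.1 ↑x.2) using 1; simp
    have hmem : (e a, e b, d ↑a ↑b) ∈ D := ⟨w, hwΔ, hLw⟩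
    have := hu2 _ hmem
    rw [hsplit] at this
    exact this
  -- the product vector
  set qs : (ι × ι) → ℝ := fun p => μr ↑p.1 * νr ↑p.2 with hqs
  set cstar : ℝ := ∑ p : ι × ι, d ↑p.1 ↑p.2 * qs p with hcstar
  have hqsΔ : qs ∈ stdSimplex ℝ (ι × ι) := by
    constructor
    · intro p; exact mul_nonneg (hμr0 _) (hνr0 _)
    · rw [Fintype.sum_prod_type]
      have : ∀ a : ι, ∑ b : ι, qs (a, b) = μr ↑a := by
        intro a
        rw [hqs]; dsimp only
        rw [← Finset.mul_sum, hνrsum, mul_one]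
      rw [Finset.sum_congr rfl fun a _ => this a, hμrsum]
  have hLqs : Lc qs = (fun a : ι => μr ↑a, fun b : ι => νr ↑b, cstar) := by
    rw [hLcoe]
    refine Prod.ext (funext fun a => ?_) (Prod.ext (funext fun b => ?_) rfl)
    · show ∑ b : ι, qs (a, b) = μr ↑a
      rw [hqs]; dsimp only
      rw [← Finset.mul_sum, hνrsum, mul_one]
    · show ∑ a : ι, qs (a, b) = νr ↑b
      rw [hqs]; dsimp only
      rw [← Finset.sum_mul, hμrsum, one_mul]
  have hcstar0 : 0 ≤ cstar := by
    rw [hcstar]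
    exact Finset.sum_nonneg fun p _ => mul_nonneg (hd.nonneg _ _)
      (mul_nonneg (hμr0 _) (hνr0 _))
  -- Wass ≤ cstar via the product coupling
  have hWcstar : (Wass d μ ν).toReal ≤ cstar := by
    have hQP : IsCoupling μ ν (fun p : V × V => μ p.1 * ν p.2) := prod_coupling hμ hν
    have hWle : Wass d μ ν ≤ ENNReal.ofReal cstar := by
      have hcc : ∑ p ∈ F ×ˢ F, d p.1 p.2 * (μ p.1 * ν p.2).toReal = cstar := by
        rw [hcstar, ← sum_attach_prod F (fun a b => d a b * (μ a * ν b).toReal)]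
        refine Finset.sum_congr rfl fun p _ => ?_
        rw [ENNReal.toReal_mul]
      rw [Wass]
      refine iInf_le_of_le ⟨_, hQP⟩ ?_
      rw [cost_eq hd hμ hΩ hfin hQP, hcc]
    have := ENNReal.toReal_mono ENNReal.ofReal_ne_top hWle
    rwa [ENNReal.toReal_ofReal hcstar0] at this
  have htc : t < cstar := lt_of_lt_of_le ht hWcstar
  -- positivity of s
  set A : ℝ := φ ((fun a : ι => μr ↑a), 0, 0) with hA
  set B : ℝ := φ (0, (fun b : ι => νr ↑b), 0) with hB
  have hptφ : φ pt = A + B + t * s := hsplit _ _ _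
  have hqsφ : u < A + B + cstar * s := by
    have hmem : ((fun a : ι => μr ↑a), (fun b : ι => νr ↑b), cstar) ∈ D := ⟨qs, hqsΔ, hLqs⟩
    have := hu2 _ hmem
    rw [hsplit] at this
    exact this
  have hu1' : A + B + t * s < u := by rw [← hptφ]; exact hu1
  have hts : t * s < cstar * s := by linarith
  have hs_pos : 0 < s := by
    by_contra hsp
    push_neg at hsp
    have := mul_le_mul_of_nonpos_right htc.le hsp
    linarith
  -- the Lipschitz function
  haveI := hι
  have hune : (Finset.univ : Finset ι).Nonempty := Finset.univ_nonempty
  set G : V → ℝ := fun x => Finset.univ.inf' hune (fun b : ι => d x ↑b + gg b / s) with hG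
  have hGle : ∀ (x : V) (b : ι), G x ≤ d x ↑b + gg b / s := fun x b =>
    Finset.inf'_le _ (Finset.mem_univ b)
  have hGlip1 : ∀ x y : V, G x ≤ d x y + G y := by
    intro x y
    obtain ⟨b0, _, hb0⟩ := Finset.exists_mem_eq_inf' hune (fun b : ι => d y ↑b + gg b / s)
    have h1 := hGle x b0
    have h2 := hd.2.2 x y ↑b0
    have h3 : G y = d y ↑b0 + gg b0 / s := hb0
    linarith
  have hGlip : ∀ x y : V, |G x - G y| ≤ d x y := by
    intro x y
    rw [abs_sub_le_iff]
    constructor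
    · linarith [hGlip1 x y]
    · have h := hGlip1 y x
      rw [hd.1 y x] at h
      linarith
  have hGlb : ∀ a : ι, (u - f a) / s ≤ G ↑a := by
    intro a
    refine Finset.le_inf' _ _ fun b _ => ?_
    rw [div_le_iff₀ hs_pos]
    have hv := hvertex a b
    have hexp : (d ↑a ↑b + gg b / s) * s = d ↑a ↑b * s + gg b := by
      field_simp
    rw [hexp]
    linarith
  have hGub : ∀ a : ι, G ↑a ≤ gg a / s := by
    intro a
    have h := hGle (↑a) a
    have hdaa : d ↑a ↑a = 0 := (hd.2.1 _ _).mpr rfl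
    rw [hdaa, zero_add] at h
    exact h
  have hAeq : A = ∑ a : ι, μr ↑a * f a := hlin1 _
  have hBeq : B = ∑ b : ι, νr ↑b * gg b := hlin2 _
  have hub : ∑ z : ι, G ↑z * νr ↑z ≤ B / s := by
    rw [hBeq, Finset.sum_div]
    refine Finset.sum_le_sum fun z _ => ?_
    calc G ↑z * νr ↑z ≤ (gg z / s) * νr ↑z :=
          mul_le_mul_of_nonneg_right (hGub z) (hνr0 _)
      _ = νr ↑z * gg z / s := by ring
  have hlb : (u - A) / s ≤ ∑ z : ι, G ↑z * μr ↑z := by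
    have h1 : ∑ z : ι, ((u - f z) / s) * μr ↑z ≤ ∑ z : ι, G ↑z * μr ↑z :=
      Finset.sum_le_sum fun z _ => mul_le_mul_of_nonneg_right (hGlb z) (hμr0 _)
    have h2 : ∑ z : ι, ((u - f z) / s) * μr ↑z = (u - A) / s := by
      calc ∑ z : ι, ((u - f z) / s) * μr ↑z
          = (∑ z : ι, (u * μr ↑z - μr ↑z * f z)) / s := by
            rw [Finset.sum_div]
            refine Finset.sum_congr rfl fun z _ => ?_
            ring
        _ = (u - A) / s := by
            rw [Finset.sum_sub_distrib, ← Finset.mul_sum, hμrsum, mul_one, hAeq]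
    linarith
  have hfinal : t < ∑ z : ι, G ↑z * (μr ↑z - νr ↑z) := by
    have hsum : ∑ z : ι, G ↑z * (μr ↑z - νr ↑z)
        = ∑ z : ι, G ↑z * μr ↑z - ∑ z : ι, G ↑z * νr ↑z := by
      rw [← Finset.sum_sub_distrib]
      refine Finset.sum_congr rfl fun z _ => ?_
      ring
    have ht' : t < (u - A - B) / s := by
      rw [lt_div_iff₀ hs_pos]
      linarith [hu1']
    have hspl : (u - A - B) / s = (u - A) / s - B / s := by ring
    rw [hsum]
    linarith [hlb, hub, ht']
  refine ⟨G, fun a _ b _ => hGlip a b, ?_⟩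
  show t < ∑ z ∈ F, G z * (μr z - νr z)
  rw [← sum_attach_univ F (fun z => G z * (μr z - νr z))]
  exact hfinal

end strong

theorem kantorovich_duality_localized_to_supports
    [Countable V] (d : V → V → ℝ) (hd : IsMetric d)
    (μ ν : V → ℝ≥0∞) (hμ : IsPMF μ) (hν : IsPMF ν)
    (Ω : Set V) (hΩ : Ω = {z | μ z ≠ 0} ∪ {z | ν z ≠ 0})
    (hfin : Ω.Finite) :
    Wass d μ ν = ENNReal.ofReal
      (sSup {s | ∃ g : V → ℝ, (∀ a ∈ Ω, ∀ b ∈ Ω, |g a - g b| ≤ d a b) ∧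
        s = ∑ z ∈ hfin.toFinset, g z * ((μ z).toReal - (ν z).toReal)}) := by
  classical
  set F := hfin.toFinset with hF
  set S := {s | ∃ g : V → ℝ, (∀ a ∈ Ω, ∀ b ∈ Ω, |g a - g b| ≤ d a b) ∧
        s = ∑ z ∈ F, g z * ((μ z).toReal - (ν z).toReal)} with hS
  have hQP : IsCoupling μ ν (fun p : V × V => μ p.1 * ν p.2) := prod_coupling hμ hν
  have hSne : S.Nonempty := by
    refine ⟨_, (fun _ => (0 : ℝ)), fun a _ b _ => ?_, rfl⟩
    simpa using hd.nonneg a b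
  have hbdd : BddAbove S := by
    refine ⟨∑ p ∈ F ×ˢ F, d p.1 p.2 * ((μ p.1 * ν p.2)).toReal, ?_⟩
    rintro x ⟨g, hg, rfl⟩
    exact weak_duality hd hμ hΩ hfin hQP hg
  have hWfin : Wass d μ ν ≠ ⊤ := by
    refine ne_top_of_le_ne_top (@ENNReal.ofReal_ne_top
      (∑ p ∈ F ×ˢ F, d p.1 p.2 * ((μ p.1 * ν p.2)).toReal)) ?_
    rw [Wass]
    refine iInf_le_of_le ⟨_, hQP⟩ ?_
    rw [cost_eq hd hμ hΩ hfin hQP]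
  apply le_antisymm
  · have hkey : (Wass d μ ν).toReal ≤ sSup S := by
      refine le_of_forall_lt fun t htlt => ?_
      obtain ⟨g, hg, hgt⟩ := strong_duality hd hμ hν hΩ hfin t htlt
      exact lt_of_lt_of_le hgt (le_csSup hbdd ⟨g, hg, rfl⟩)
    calc Wass d μ ν = ENNReal.ofReal (Wass d μ ν).toReal :=
          (ENNReal.ofReal_toReal hWfin).symm
      _ ≤ ENNReal.ofReal (sSup S) := ENNReal.ofReal_le_ofReal hkey
  · rw [Wass]
    refine le_iInf fun qp => ?_
    obtain ⟨q, hq⟩ := qp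
    rw [cost_eq hd hμ hΩ hfin hq]
    apply ENNReal.ofReal_le_ofReal
    apply csSup_le hSne
    rintro x ⟨g, hg, rfl⟩
    exact weak_duality hd hμ hΩ hfin hq hg
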